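/- Let θ ∈ (0, π/2) and let λ ∈ (0, π/(2·sin θ)) satisfy cos(θ)·tanh(λ·cos(θ)) = sin(θ)·cot(λ·sin(θ)). Then the partial derivative in θ of f(λ,θ) = cos(θ)·tanh(λ·cos(θ)) − sin(θ)·cot(λ·sin(θ)) at this point equals −sec(θ)·cot(λ·sin(θ))·(1 − λ·sin(θ)·cot(λ·sin(θ))), and this quantity is strictly negative. -/

import Mathlib

lemma my_hasDerivAt_tanh (x : ℝ) : HasDerivAt Real.tanh (1 - Real.tanh x ^ 2) x := by
  have h := (Real.hasDerivAt_sinh x).div (Real.hasDerivAt_cosh x) (Real.cosh_pos x).ne'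
  have he : (Real.sinh / Real.cosh) = Real.tanh := by
    ext y; rw [Pi.div_apply, Real.tanh_eq_sinh_div_cosh]
  rw [he] at h
  refine h.congr_deriv ?_
  rw [Real.tanh_eq_sinh_div_cosh]
  have h1 := Real.cosh_sq_sub_sinh_sq x
  have h2 := (Real.cosh_pos x).ne'
  field_simp

theorem deriv_f_theta_neg {θ l : ℝ} (h0 : 0 < θ) (h1 : θ < Real.pi / 2)
    (hl : l ∈ Set.Ioo 0 (Real.pi / (2 * Real.sin θ)))
    (hzero : Real.cos θ * Real.tanh (l * Real.cos θ)
      = Real.sin θ * (Real.cos (l * Real.sin θ) / Real.sin (l * Real.sin θ))) :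
    deriv (fun t : ℝ => Real.cos t * Real.tanh (l * Real.cos t)
        - Real.sin t * (Real.cos (l * Real.sin t) / Real.sin (l * Real.sin t))) θ
      = -(1 / Real.cos θ) * (Real.cos (l * Real.sin θ) / Real.sin (l * Real.sin θ))
          * (1 - l * Real.sin θ * (Real.cos (l * Real.sin θ) / Real.sin (l * Real.sin θ)))
    ∧ -(1 / Real.cos θ) * (Real.cos (l * Real.sin θ) / Real.sin (l * Real.sin θ))
          * (1 - l * Real.sin θ * (Real.cos (l * Real.sin θ) / Real.sin (l * Real.sin θ))) < 0 := by
  obtain ⟨hl0, hl1⟩ := hl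
  have hpi := Real.pi_pos
  have hs : 0 < Real.sin θ := Real.sin_pos_of_pos_of_lt_pi h0 (by linarith)
  have hc : 0 < Real.cos θ := Real.cos_pos_of_mem_Ioo ⟨by linarith, h1⟩
  have hY0 : 0 < l * Real.sin θ := mul_pos hl0 hs
  have hY2 : l * Real.sin θ < Real.pi / 2 := by
    have h := (lt_div_iff₀ (by positivity : (0:ℝ) < 2 * Real.sin θ)).mp hl1
    nlinarith
  have hsY : 0 < Real.sin (l * Real.sin θ) :=
    Real.sin_pos_of_pos_of_lt_pi hY0 (by linarith)
  have hcY : 0 < Real.cos (l * Real.sin θ) := Real.cos_pos_of_mem_Ioo ⟨by linarith, hY2⟩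
  -- derivative computation
  have h5 : HasDerivAt (fun t => l * Real.sin t) (l * Real.cos θ) θ :=
    (Real.hasDerivAt_sin θ).const_mul l
  have h1c : HasDerivAt (fun t => l * Real.cos t) (l * -Real.sin θ) θ :=
    (Real.hasDerivAt_cos θ).const_mul l
  have htanh : HasDerivAt (fun t => Real.tanh (l * Real.cos t))
      ((1 - Real.tanh (l * Real.cos θ) ^ 2) * (l * -Real.sin θ)) θ :=
    by have := (my_hasDerivAt_tanh (l * Real.cos θ)).comp θ h1c; exact this
  have hA : HasDerivAt (fun t => Real.cos t * Real.tanh (l * Real.cos t))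
      (-Real.sin θ * Real.tanh (l * Real.cos θ)
        + Real.cos θ * ((1 - Real.tanh (l * Real.cos θ) ^ 2) * (l * -Real.sin θ))) θ :=
    (Real.hasDerivAt_cos θ).mul htanh
  have hnum : HasDerivAt (fun t => Real.cos (l * Real.sin t))
      (-Real.sin (l * Real.sin θ) * (l * Real.cos θ)) θ :=
    by have := (Real.hasDerivAt_cos (l * Real.sin θ)).comp θ h5; exact this
  have hden : HasDerivAt (fun t => Real.sin (l * Real.sin t))
      (Real.cos (l * Real.sin θ) * (l * Real.cos θ)) θ :=
    by have := (Real.hasDerivAt_sin (l * Real.sin θ)).comp θ h5; exact this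
  have hquot := hnum.div hden hsY.ne'
  have hB := (Real.hasDerivAt_sin θ).mul hquot
  have hf := hA.sub hB
  have hd := hf.deriv
  -- solve for tanh from the zero condition
  have hT : Real.tanh (l * Real.cos θ)
      = Real.sin θ * Real.cos (l * Real.sin θ) / (Real.cos θ * Real.sin (l * Real.sin θ)) := by
    field_simp
    field_simp at hzero
    rw [mul_comm (Real.cos θ) l] at hzero
    linarith
  constructor
  · have hd' : deriv (fun t : ℝ => Real.cos t * Real.tanh (l * Real.cos t) - Real.sin t * (Real.cos (l * Real.sin t) / Real.sin (l * Real.sin t))) θ = -Real.sin θ * Real.tanh (l * Real.cos θ) + Real.cos θ * ((1 - Real.tanh (l * Real.cos θ) ^ 2) * (l * -Real.sin θ)) - (Real.cos θ * (Real.cos (l * Real.sin θ) / Real.sin (l * Real.sin θ)) + Real.sin θ * ((-Real.sin (l * Real.sin θ) * (l * Real.cos θ) * Real.sin (l * Real.sin θ) - Real.cos (l * Real.sin θ) * (Real.cos (l * Real.sin θ) * (l * Real.cos θ))) / Real.sin (l * Real.sin θ) ^ 2)) := hd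
    rw [hd', hT]
    have hs2 := Real.sin_sq_add_cos_sq θ
    have hY2' := Real.sin_sq_add_cos_sq (l * Real.sin θ)
    have : Real.sin (Real.sin θ * l) ≠ 0 := by rw [mul_comm]; exact hsY.ne'
    have := hc.ne'
    field_simp
    ring_nf
    linear_combination (Real.sin θ * l * Real.cos (Real.sin θ * l) ^ 2
      - Real.cos (Real.sin θ * l) * Real.sin (Real.sin θ * l)) * hs2
  · have hlt : l * Real.sin θ * Real.cos (l * Real.sin θ) < Real.sin (l * Real.sin θ) := by
      have ht := Real.lt_tan hY0 hY2
      rw [Real.tan_eq_sin_div_cos] at ht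
      exact (lt_div_iff₀ hcY).mp ht
    have h6 : l * Real.sin θ * (Real.cos (l * Real.sin θ) / Real.sin (l * Real.sin θ)) < 1 := by
      rw [show l * Real.sin θ * (Real.cos (l * Real.sin θ) / Real.sin (l * Real.sin θ))
          = (l * Real.sin θ * Real.cos (l * Real.sin θ)) / Real.sin (l * Real.sin θ) by ring]
      exact (div_lt_one hsY).mpr hlt
    have hpos : 0 < (1 / Real.cos θ) * (Real.cos (l * Real.sin θ) / Real.sin (l * Real.sin θ))
        * (1 - l * Real.sin θ * (Real.cos (l * Real.sin θ) / Real.sin (l * Real.sin θ))) := by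
      apply mul_pos (mul_pos (by positivity) (by positivity))
      linarith
    nlinarith [hpos]
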